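/- For every natural number L ≥ 1, the number of pairs (a, b) of natural numbers with 1 ≤ a ≤ L, 1 ≤ b ≤ L, and gcd(a, b) = 1 is strictly greater than L²/2. -/
import Mathlib

open Finset

lemma telescope_sum (M : ℕ) :
    ∑ j ∈ Icc 1 M, (1:ℝ)/(4*j*(j+1)) = 1/4 - 1/(4*(M+1)) := by
  induction M with
  | zero => simp
  | succ n ih =>
    rw [Finset.sum_Icc_succ_top (by omega), ih]
    have h1 : ((n:ℝ)+1) ≠ 0 := by positivity
    have h2 : ((n:ℝ)+2) ≠ 0 := by positivity
    push_cast
    field_simp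
    ring

lemma count_dvd (L q : ℕ) :
    ((Finset.Icc 1 L ×ˢ Finset.Icc 1 L).filter
      (fun x => q ∣ x.1 ∧ q ∣ x.2)).card = (L / q)^2 := by
  rw [Finset.filter_product, Finset.card_product]
  rw [show (Finset.Icc 1 L) = Finset.Ioc 0 L from Finset.Icc_add_one_left_eq_Ioc 0 L,
    Nat.Ioc_filter_dvd_card_eq_div, sq]

theorem coprime_pairs_count (L : ℕ) (hL : 1 ≤ L) :
    (L : ℝ) ^ 2 / 2 <
      (((Finset.Icc 1 L ×ˢ Finset.Icc 1 L).filter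
        (fun p => Nat.gcd p.1 p.2 = 1)).card : ℝ) := by
  classical
  set S := Finset.Icc 1 L ×ˢ Finset.Icc 1 L with hS
  have hScard : S.card = L ^ 2 := by
    simp [hS, Nat.card_Icc, sq]
  set P := (Icc 2 L).filter Nat.Prime with hP
  -- the non-coprime pairs are covered by the prime-divisibility sets
  have hsub : S.filter (fun x => ¬ Nat.gcd x.1 x.2 = 1) ⊆
      P.biUnion (fun q => S.filter (fun x => q ∣ x.1 ∧ q ∣ x.2)) := by
    intro x hx
    simp only [mem_filter] at hx
    obtain ⟨hxS, hg⟩ := hx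
    have hx1 : 1 ≤ x.1 ∧ x.1 ≤ L := by
      have := (Finset.mem_product.mp hxS).1
      exact Finset.mem_Icc.mp this
    have hgpos : 0 < Nat.gcd x.1 x.2 := Nat.gcd_pos_of_pos_left _ (by omega)
    have hg2 : 2 ≤ Nat.gcd x.1 x.2 := by omega
    set g := Nat.gcd x.1 x.2 with hgdef
    have hprime : (g.minFac).Prime := Nat.minFac_prime (by omega)
    have hdvdg : g.minFac ∣ g := Nat.minFac_dvd g
    have hgle : g ≤ L := le_trans (Nat.le_of_dvd (by omega) (Nat.gcd_dvd_left _ _)) hx1.2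
    simp only [mem_biUnion, mem_filter]
    refine ⟨g.minFac, ?_, hxS, ?_, ?_⟩
    · simp only [hP, mem_filter, mem_Icc]
      exact ⟨⟨hprime.two_le, le_trans (Nat.le_of_dvd (by omega) hdvdg) hgle⟩, hprime⟩
    · exact hdvdg.trans (Nat.gcd_dvd_left _ _)
    · exact hdvdg.trans (Nat.gcd_dvd_right _ _)
  have hNbound : (S.filter (fun x => ¬ Nat.gcd x.1 x.2 = 1)).card ≤ ∑ q ∈ P, (L / q)^2 := by
    refine (Finset.card_le_card hsub).trans ?_
    refine Finset.card_biUnion_le.trans ?_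
    refine Finset.sum_le_sum fun q _ => ?_
    rw [count_dvd]
  -- real-valued bound on the sum
  have hsumR : (∑ q ∈ P, ((L / q : ℕ) : ℝ)^2) < (L:ℝ)^2 / 2 := by
    have hLpos : (0:ℝ) < L := by positivity
    have hstep1 : (∑ q ∈ P, ((L / q : ℕ) : ℝ)^2) ≤
        (L:ℝ)^2/4 + ∑ q ∈ P.erase 2, ((L / q : ℕ) : ℝ)^2 := by
      by_cases h2 : 2 ∈ P
      · rw [← Finset.add_sum_erase _ _ h2]
        have : ((L / 2 : ℕ) : ℝ)^2 ≤ (L:ℝ)^2/4 := by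
          have := Nat.cast_div_le (m := L) (n := 2) (α := ℝ)
          have h' : ((L / 2 : ℕ) : ℝ) ≤ (L:ℝ)/2 := by push_cast at this ⊢; linarith
          nlinarith [Nat.cast_nonneg (α := ℝ) (L/2)]
        linarith
      · rw [Finset.erase_eq_of_notMem h2]
        have : (0:ℝ) ≤ (L:ℝ)^2/4 := by positivity
        linarith
    have hstep2 : ∑ q ∈ P.erase 2, ((L / q : ℕ) : ℝ)^2 ≤
        ∑ q ∈ P.erase 2, (L:ℝ)^2 / (q^2 - 1) := by
      refine Finset.sum_le_sum fun q hq => ?_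
      have hq' : q ∈ P := Finset.mem_of_mem_erase hq
      have hqprime : q.Prime := (Finset.mem_filter.mp hq').2
      have hqne2 : q ≠ 2 := Finset.ne_of_mem_erase hq
      have hq3 : 3 ≤ q := by
        rcases hqprime.eq_two_or_odd' with h | h
        · exact absurd h hqne2
        · have := hqprime.two_le; omega
      have hq3R : (3:ℝ) ≤ q := by exact_mod_cast hq3
      have hcast : ((L / q : ℕ) : ℝ) ≤ (L:ℝ)/q := by
        have := Nat.cast_div_le (m := L) (n := q) (α := ℝ); push_cast at this ⊢; linarith
      have h1 : ((L / q : ℕ) : ℝ)^2 ≤ ((L:ℝ)/q)^2 := by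
        nlinarith [Nat.cast_nonneg (α := ℝ) (L/q)]
      have h2 : ((L:ℝ)/q)^2 ≤ (L:ℝ)^2 / (q^2 - 1) := by
        rw [div_pow]
        apply div_le_div_of_nonneg_left (by positivity) (by nlinarith) (by nlinarith)
      linarith
    set f : ℕ → ℝ := fun q => (L:ℝ)^2 / ((q:ℝ)^2 - 1) with hf
    have hstep3 : ∑ q ∈ P.erase 2, (L:ℝ)^2 / ((q:ℝ)^2 - 1) ≤
        ∑ j ∈ Icc 1 L, f (2*j+1) := by
      have himg : P.erase 2 ⊆ (Icc 1 L).image (fun j => 2*j+1) := by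
        intro q hq
        have hq' : q ∈ P := Finset.mem_of_mem_erase hq
        have hqprime : q.Prime := (Finset.mem_filter.mp hq').2
        have hqle : q ≤ L := (Finset.mem_Icc.mp (Finset.mem_filter.mp hq').1).2
        have hqne2 : q ≠ 2 := Finset.ne_of_mem_erase hq
        have hodd : Odd q := hqprime.odd_of_ne_two hqne2
        obtain ⟨j, hj⟩ := hodd
        have h2le := hqprime.two_le
        simp only [Finset.mem_image, Finset.mem_Icc]
        exact ⟨j, ⟨by omega, by omega⟩, by omega⟩
      have hinj : ∀ a ∈ Icc 1 L, ∀ b ∈ Icc 1 L, 2*a+1 = 2*b+1 → a = b := by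
        intro a _ b _ h; omega
      have h1 : ∑ q ∈ P.erase 2, f q ≤ ∑ q ∈ (Icc 1 L).image (fun j => 2*j+1), f q := by
        refine Finset.sum_le_sum_of_subset_of_nonneg himg fun q hq _ => ?_
        obtain ⟨j, hj, rfl⟩ := Finset.mem_image.mp hq
        have hj1 : 1 ≤ j := (Finset.mem_Icc.mp hj).1
        have hjR : (1:ℝ) ≤ (j:ℝ) := by exact_mod_cast hj1
        have : (3:ℝ) ≤ ((2*j+1 : ℕ):ℝ) := by push_cast; linarith
        rw [hf]
        have : (0:ℝ) < ((2*j+1 : ℕ):ℝ)^2 - 1 := by nlinarith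
        positivity
      rw [Finset.sum_image hinj] at h1
      exact h1
    have hstep4 : ∑ j ∈ Icc 1 L, f (2*j+1) = (L:ℝ)^2 * (1/4 - 1/(4*(L+1))) := by
      rw [← telescope_sum L, Finset.mul_sum]
      refine Finset.sum_congr rfl fun j hj => ?_
      have hj1 : 1 ≤ j := (Finset.mem_Icc.mp hj).1
      have hjR : (1:ℝ) ≤ (j:ℝ) := by exact_mod_cast hj1
      rw [hf]
      simp only []
      have h : ((2*j+1 : ℕ):ℝ)^2 - 1 = 4*(j:ℝ)*((j:ℝ)+1) := by push_cast; ring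
      rw [h, div_eq_mul_one_div]
    have hfinal : (L:ℝ)^2/4 + (L:ℝ)^2 * (1/4 - 1/(4*(L+1))) < (L:ℝ)^2/2 := by
      have hL1 : (1:ℝ) ≤ L := by exact_mod_cast hL
      have hpos : (0:ℝ) < 4*((L:ℝ)+1) := by positivity
      have : 0 < (L:ℝ)^2 * (1/(4*(L+1))) := by positivity
      nlinarith
    calc (∑ q ∈ P, ((L / q : ℕ) : ℝ)^2)
        ≤ (L:ℝ)^2/4 + ∑ q ∈ P.erase 2, ((L / q : ℕ) : ℝ)^2 := hstep1
      _ ≤ (L:ℝ)^2/4 + ∑ q ∈ P.erase 2, (L:ℝ)^2 / (q^2 - 1) := by linarith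
      _ ≤ (L:ℝ)^2/4 + ∑ j ∈ Icc 1 L, f (2*j+1) := by linarith
      _ = (L:ℝ)^2/4 + (L:ℝ)^2 * (1/4 - 1/(4*(L+1))) := by rw [hstep4]
      _ < (L:ℝ)^2/2 := hfinal
  -- conclude
  have hsplit : (S.filter (fun x => Nat.gcd x.1 x.2 = 1)).card +
      (S.filter (fun x => ¬ Nat.gcd x.1 x.2 = 1)).card = L^2 := by
    rw [Finset.card_filter_add_card_filter_not, hScard]
  have hNreal : ((S.filter (fun x => ¬ Nat.gcd x.1 x.2 = 1)).card : ℝ) < (L:ℝ)^2/2 := by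
    calc ((S.filter (fun x => ¬ Nat.gcd x.1 x.2 = 1)).card : ℝ)
        ≤ ((∑ q ∈ P, (L / q)^2 : ℕ) : ℝ) := by exact_mod_cast hNbound
      _ = ∑ q ∈ P, ((L / q : ℕ) : ℝ)^2 := by push_cast; ring
      _ < (L:ℝ)^2/2 := hsumR
  have : ((S.filter (fun x => Nat.gcd x.1 x.2 = 1)).card : ℝ) +
      ((S.filter (fun x => ¬ Nat.gcd x.1 x.2 = 1)).card : ℝ) = (L:ℝ)^2 := by
    exact_mod_cast hsplit
  linarith
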